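/- For any n×n matrix A with ‖A‖ ≤ 1 whose rows are all equal (i.e., A consists of n copies of a single row repeated, arising from s_1 = n), the probability quantity |Per(A)|²/n! is at most n!/n^n. -/

import Mathlib

/-- The operator (spectral) 2-norm of a complex matrix. -/
noncomputable def opNorm {m k : ℕ} (A : Matrix (Fin m) (Fin k) ℂ) : ℝ :=
  ‖LinearMap.toContinuousLinearMap (Matrix.toEuclideanLin A)‖

/-- **No `n`-photon Hong–Ou–Mandel dip for a single mode.**  For any `n × n` matrix `A`
with `‖A‖ ≤ 1` whose rows are all equal (the case `k = 1`, `s_1 = n`), the probability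
quantity `|Per(A)|²/n!` is at most `n!/nⁿ`. -/
theorem single_mode_probability_bound (n : ℕ) (A : Matrix (Fin n) (Fin n) ℂ)
    (hA : opNorm A ≤ 1) (hrows : ∀ i i' j, A i j = A i' j) :
    ‖∑ σ : Equiv.Perm (Fin n), ∏ i, A i (σ i)‖ ^ 2 / (n.factorial : ℝ)
      ≤ (n.factorial : ℝ) / (n : ℝ) ^ n := by
  rcases Nat.eq_zero_or_pos n with hn | hn
  · subst hn
    simp
  have hn' : (0 : ℝ) < n := by exact_mod_cast hn
  set i0 : Fin n := ⟨0, hn⟩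
  set r : Fin n → ℂ := fun j => A i0 j with hr
  -- Step 1: the permanent of a matrix with equal rows
  have hsum : (∑ σ : Equiv.Perm (Fin n), ∏ i, A i (σ i)) = (n.factorial : ℂ) * ∏ j, r j := by
    have h1 : ∀ σ : Equiv.Perm (Fin n), (∏ i, A i (σ i)) = ∏ j, r j := by
      intro σ
      rw [show (∏ i, A i (σ i)) = ∏ i, r (σ i) from
        Finset.prod_congr rfl fun i _ => hrows i i0 (σ i)]
      exact Equiv.prod_comp σ r
    rw [Finset.sum_congr rfl fun σ _ => h1 σ, Finset.sum_const, Finset.card_univ,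
      Fintype.card_perm, Fintype.card_fin, nsmul_eq_mul]
  set t : ℝ := ∑ j, ‖r j‖ ^ 2 with ht
  clear_value t
  have ht0 : 0 ≤ t := ht ▸ Finset.sum_nonneg fun j _ => sq_nonneg _
  -- Step 2: t ≤ 1/n
  have ht1 : t ≤ 1 / n := by
    set x : EuclideanSpace ℂ (Fin n) :=
      (WithLp.equiv 2 (Fin n → ℂ)).symm (fun j => (starRingEnd ℂ) (r j)) with hx
    clear_value x
    have hxnorm : ‖x‖ = Real.sqrt t := by
      rw [EuclideanSpace.norm_eq]
      congr 1
      rw [ht]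
      refine Finset.sum_congr rfl fun j _ => ?_
      simp [hx, WithLp.equiv_symm_apply, PiLp.toLp_apply]
    have hAx : Matrix.toEuclideanLin A x =
        (WithLp.equiv 2 (Fin n → ℂ)).symm (fun _ => (t : ℂ)) := by
      rw [hx, WithLp.equiv_symm_apply, Matrix.toEuclideanLin_apply_piLp_toLp]
      congr 1
      funext i
      simp only [Matrix.mulVec, dotProduct]
      calc ∑ j, A i j * (starRingEnd ℂ) (r j)
          = ∑ j, ((‖r j‖ ^ 2 : ℝ) : ℂ) := by
            refine Finset.sum_congr rfl fun j _ => ?_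
            rw [hrows i i0 j, show A i0 j = r j from rfl, Complex.mul_conj]
            exact congrArg Complex.ofReal (Complex.sq_norm (r j)).symm
        _ = (t : ℂ) := by rw [ht]; push_cast; ring
    have hAxnorm : ‖Matrix.toEuclideanLin A x‖ = Real.sqrt n * t := by
      rw [hAx, EuclideanSpace.norm_eq]
      have h2 : ∀ j : Fin n,
          ‖(WithLp.equiv 2 (Fin n → ℂ)).symm (fun _ => (t : ℂ)) j‖ ^ 2 = t ^ 2 := by
        intro j
        simp [WithLp.equiv_symm_apply, PiLp.toLp_apply, Complex.norm_real, abs_of_nonneg ht0]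
      rw [Finset.sum_congr rfl fun j _ => h2 j, Finset.sum_const, Finset.card_univ,
        Fintype.card_fin, nsmul_eq_mul, Real.sqrt_mul (Nat.cast_nonneg n),
        Real.sqrt_sq ht0]
    have hle : ‖Matrix.toEuclideanLin A x‖ ≤ ‖x‖ := by
      have h3 := (LinearMap.toContinuousLinearMap (Matrix.toEuclideanLin A)).le_opNorm x
      rw [LinearMap.coe_toContinuousLinearMap'] at h3
      calc ‖Matrix.toEuclideanLin A x‖ ≤ opNorm A * ‖x‖ := h3
        _ ≤ 1 * ‖x‖ := by
            have := norm_nonneg x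
            gcongr
        _ = ‖x‖ := one_mul _
    rw [hAxnorm, hxnorm] at hle
    have hsq : (n : ℝ) * t ^ 2 ≤ t := by
      have h5 : (Real.sqrt ↑n * t) ^ 2 ≤ (Real.sqrt t) ^ 2 :=
        pow_le_pow_left₀ (mul_nonneg (Real.sqrt_nonneg _) ht0) hle 2
      rw [mul_pow, Real.sq_sqrt (Nat.cast_nonneg n), Real.sq_sqrt ht0] at h5
      exact h5
    clear hle hAxnorm hAx hxnorm hx
    rw [le_div_iff₀ hn']
    nlinarith [hsq, ht0, hn']
  clear hA
  -- Step 3: AM-GM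
  set P : ℝ := ∏ j, ‖r j‖ ^ 2 with hPdef
  clear_value P
  have hP0 : 0 ≤ P := hPdef ▸ Finset.prod_nonneg fun j _ => sq_nonneg _
  have hP : P ≤ (1 / (n : ℝ)) ^ n := by
    have amgm := Real.geom_mean_le_arith_mean_weighted Finset.univ
      (fun _ : Fin n => ((n : ℝ))⁻¹) (fun j => ‖r j‖ ^ 2)
      (fun i _ => by positivity)
      (by simp [Finset.sum_const, Finset.card_univ, mul_inv_cancel₀ (ne_of_gt hn')])
      (fun i _ => sq_nonneg _)
    have hL : P ^ ((n : ℝ)⁻¹) ≤ 1 / (n : ℝ) := by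
      rw [hPdef, ← Real.finset_prod_rpow _ _ (fun i _ => sq_nonneg _)]
      calc (∏ j, (‖r j‖ ^ 2) ^ ((n : ℝ)⁻¹))
          ≤ ∑ j, ((n : ℝ))⁻¹ * ‖r j‖ ^ 2 := amgm
        _ = ((n : ℝ))⁻¹ * t := by rw [ht, Finset.mul_sum]
        _ ≤ ((n : ℝ))⁻¹ * (1 / n) := by gcongr
        _ ≤ 1 / (n : ℝ) := by
            rw [one_div, mul_comm]
            exact mul_le_of_le_one_right (by positivity) (by
              rw [inv_le_one_iff₀]; right; exact_mod_cast hn)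
    calc P = (P ^ ((n : ℝ)⁻¹)) ^ n := (Real.rpow_inv_natCast_pow hP0 hn.ne').symm
      _ ≤ (1 / (n : ℝ)) ^ n := pow_le_pow_left₀ (Real.rpow_nonneg hP0 _) hL n
  -- Conclusion
  have hfac : (0 : ℝ) < n.factorial := by exact_mod_cast n.factorial_pos
  have key : ‖∑ σ : Equiv.Perm (Fin n), ∏ i, A i (σ i)‖ ^ 2
      = (n.factorial : ℝ) ^ 2 * P := by
    rw [hsum, norm_mul, mul_pow, norm_prod, ← Finset.prod_pow, hPdef]
    norm_num [Complex.norm_natCast]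
  rw [key]
  have h6 : (n.factorial : ℝ) ^ 2 * P / n.factorial = n.factorial * P := by
    field_simp
  rw [h6]
  calc (n.factorial : ℝ) * P ≤ n.factorial * (1 / (n : ℝ)) ^ n := by gcongr
    _ = (n.factorial : ℝ) / (n : ℝ) ^ n := by
        rw [one_div, inv_pow, div_eq_mul_inv]
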